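/- Let n ∈ ℕ^q and m ∈ ℕ^{p−q} be such that n⊔m ∈ ℕ^p is near the diagonal and m is on the step-line, and set N = |n| + |m|. Let A_1, …, A_q and B_1, …, B_{p−q} be real polynomials with deg A_j ≤ n_j − 1 and deg B_j ≤ m_j − 1, and set F(x) = Σ_{j=1}^q A_j(x) w_j(x) + Σ_{j=1}^{p−q} B_j(x) v_j(x). If ∫₀^∞ F(x) x^k dx = 0 for k = 0, 1, …, N − 2, then there exists a constant c ∈ ℝ such that for every real s > 1, ∫₀^∞ F(x) x^{s−1} dx = c · (Γ(s+a)/Γ(s+b+n)) · (1−s)_{N−1}. -/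

import Mathlib

open MeasureTheory Finset Polynomial Filter
lemma auxsm (u : ℝ → ℝ) (hc : ContinuousOn u (Set.Ioi 0)) (σ : ℝ) :
    AEStronglyMeasurable (fun x : ℝ => x ^ (σ - 1) * u x)
      (volume.restrict (Set.Ioi 0)) := by
  refine ContinuousOn.aestronglyMeasurable ?_ measurableSet_Ioi
  exact (continuousOn_id.rpow_const (fun x hx => Or.inl (ne_of_gt hx))).mul hc

lemma auxint (u : ℝ → ℝ) (hc : ContinuousOn u (Set.Ioi 0))
    (hi : ∀ σ : ℝ, 0 < σ → IntegrableOn (fun x : ℝ => x ^ (σ - 1) * |u x|) (Set.Ioi 0))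
    {σ : ℝ} (hσ : 0 < σ) :
    IntegrableOn (fun x : ℝ => x ^ (σ - 1) * u x) (Set.Ioi 0) := by
  refine (hi σ hσ).mono' (auxsm u hc σ) ?_
  filter_upwards [ae_restrict_mem measurableSet_Ioi] with x hx
  have h0 : (0:ℝ) ≤ x ^ (σ - 1) := Real.rpow_nonneg (le_of_lt hx) _
  rw [Real.norm_eq_abs, abs_mul, abs_of_nonneg h0]

lemma rpow_shift {x : ℝ} (hx : 0 < x) (s : ℝ) (k : ℕ) :
    x ^ (k:ℕ) * x ^ (s-1) = x ^ ((s + k) - 1) := by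
  rw [← Real.rpow_natCast x k, ← Real.rpow_add hx]
  ring_nf

lemma gamma_poch {x : ℝ} (hx : 0 < x) (k : ℕ) :
    Real.Gamma (x + k) = (ascPochhammer ℝ k).eval x * Real.Gamma x := by
  induction k with
  | zero => simp
  | succ k ih =>
      have h1 : x + ((k:ℕ)+1:ℕ) = (x + k) + 1 := by push_cast; ring
      have h2 : x + (k:ℝ) ≠ 0 := by positivity
      rw [h1, Real.Gamma_add_one h2, ih, ascPochhammer_succ_right]
      simp [eval_mul, eval_add]
      ring

lemma poch_eval_prod (d : ℕ) (x : ℝ) :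
    (ascPochhammer ℝ d).eval x = ∏ i ∈ range d, (x + i) := by
  induction d with
  | zero => simp
  | succ d ih => rw [ascPochhammer_succ_right, prod_range_succ, ← ih]; simp

noncomputable def pochC (c : ℝ) (k : ℕ) : Polynomial ℝ :=
  (ascPochhammer ℝ k).comp (Polynomial.X + Polynomial.C c)

lemma pochC_eval (c : ℝ) (k : ℕ) (s : ℝ) :
    (pochC c k).eval s = (ascPochhammer ℝ k).eval (s + c) := by
  simp [pochC, eval_comp]

lemma pochC_natDegree_le (c : ℝ) (k : ℕ) : (pochC c k).natDegree ≤ k := by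
  refine le_trans (natDegree_comp_le) ?_
  simp [ascPochhammer_natDegree, natDegree_X_add_C]

lemma poly_eval_range (Q : Polynomial ℝ) (d : ℕ) (hQ : Q.degree < (d : WithBot ℕ)) (x : ℝ) :
    Q.eval x = ∑ k ∈ range d, Q.coeff k * x ^ k := by
  rcases eq_or_ne Q 0 with rfl | hne
  · simp
  · exact eval_eq_sum_range' ((natDegree_lt_iff_degree_lt hne).2 hQ) x

lemma auxint_mono (u : ℝ → ℝ) (hc : ContinuousOn u (Set.Ioi 0))
    (hi : ∀ σ : ℝ, 0 < σ → IntegrableOn (fun x : ℝ => x ^ (σ - 1) * |u x|) (Set.Ioi 0))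
    (c : ℝ) (k : ℕ) {s : ℝ} (hs : 0 < s) :
    IntegrableOn (fun x : ℝ => c * x ^ (k:ℕ) * u x * x ^ (s - 1)) (Set.Ioi 0) := by
  have h1 : IntegrableOn (fun x : ℝ => c * (x ^ ((s + k) - 1) * u x)) (Set.Ioi 0) :=
    (auxint u hc hi (by positivity)).const_mul c
  refine h1.congr_fun ?_ measurableSet_Ioi
  intro x hx
  have hx0 : (0:ℝ) < x := hx
  calc c * (x ^ ((s + k) - 1) * u x)
      = c * ((x ^ (k:ℕ) * x ^ (s-1)) * u x) := by rw [rpow_shift hx0]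
    _ = c * x ^ (k:ℕ) * u x * x ^ (s - 1) := by ring

lemma int_poly (u : ℝ → ℝ) (hc : ContinuousOn u (Set.Ioi 0))
    (hi : ∀ σ : ℝ, 0 < σ → IntegrableOn (fun x : ℝ => x ^ (σ - 1) * |u x|) (Set.Ioi 0))
    (Q : Polynomial ℝ) (d : ℕ) (hQ : Q.degree < (d : WithBot ℕ)) {s : ℝ} (hs : 0 < s) :
    IntegrableOn (fun x : ℝ => Q.eval x * u x * x ^ (s - 1)) (Set.Ioi 0) := by
  have h1 : IntegrableOn
      (fun x : ℝ => ∑ k ∈ range d, Q.coeff k * x ^ (k:ℕ) * u x * x ^ (s - 1)) (Set.Ioi 0) :=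
    integrable_finset_sum _ (fun k _ => auxint_mono u hc hi _ k hs)
  refine h1.congr_fun ?_ measurableSet_Ioi
  intro x hx
  dsimp only
  rw [poly_eval_range Q d hQ x, Finset.sum_mul, Finset.sum_mul]

lemma mellin_poly (u : ℝ → ℝ) (hc : ContinuousOn u (Set.Ioi 0))
    (hi : ∀ σ : ℝ, 0 < σ → IntegrableOn (fun x : ℝ => x ^ (σ - 1) * |u x|) (Set.Ioi 0))
    (g : ℝ → ℝ) (hg : ∀ s : ℝ, 1 ≤ s → ∫ x in Set.Ioi (0:ℝ), x ^ (s - 1) * u x = g s)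
    (Q : Polynomial ℝ) (d : ℕ) (hQ : Q.degree < (d : WithBot ℕ)) {s : ℝ} (hs : 1 ≤ s) :
    ∫ x in Set.Ioi (0:ℝ), Q.eval x * u x * x ^ (s - 1)
      = ∑ k ∈ range d, Q.coeff k * g (s + k) := by
  have hs0 : (0:ℝ) < s := lt_of_lt_of_le one_pos hs
  have step1 : ∫ x in Set.Ioi (0:ℝ), Q.eval x * u x * x ^ (s - 1)
      = ∫ x in Set.Ioi (0:ℝ), ∑ k ∈ range d, Q.coeff k * (x ^ ((s + k) - 1) * u x) := by
    refine setIntegral_congr_fun measurableSet_Ioi ?_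
    intro x hx
    have hx0 : (0:ℝ) < x := hx
    dsimp only
    rw [poly_eval_range Q d hQ x, Finset.sum_mul, Finset.sum_mul]
    refine Finset.sum_congr rfl (fun k _ => ?_)
    rw [← rpow_shift hx0 s k]
    ring
  rw [step1, integral_finset_sum]
  · refine Finset.sum_congr rfl (fun k _ => ?_)
    rw [integral_const_mul, hg (s + k) (by have : (0:ℝ) ≤ (k:ℕ) := Nat.cast_nonneg k; linarith)]
  · intro k _
    exact ((auxint u hc hi (show (0:ℝ) < s + (k:ℕ) by positivity)).const_mul _)

lemma mellin_at_one (u : ℝ → ℝ) (hc : ContinuousOn u (Set.Ioi 0))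
    (hi : ∀ σ : ℝ, 0 < σ → IntegrableOn (fun x : ℝ => x ^ (σ - 1) * |u x|) (Set.Ioi 0))
    (g : ℝ → ℝ) (hg : ContinuousAt g 1)
    (h : ∀ s : ℝ, 1 < s → ∫ x in Set.Ioi (0:ℝ), x ^ (s - 1) * u x = g s) :
    ∫ x in Set.Ioi (0:ℝ), x ^ ((1:ℝ) - 1) * u x = g 1 := by
  set M : ℝ → ℝ := fun s => ∫ x in Set.Ioi (0:ℝ), x ^ (s - 1) * u x with hM
  have hMc : ContinuousAt M 1 := by
    refine continuousAt_of_dominated (bound := fun x =>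
      x ^ ((1/2 : ℝ) - 1) * |u x| + x ^ ((2:ℝ) - 1) * |u x|) ?_ ?_ ?_ ?_
    · exact Eventually.of_forall (fun s => auxsm u hc s)
    · have hmem : Set.Ioo (1/2 : ℝ) 2 ∈ nhds (1:ℝ) :=
        Ioo_mem_nhds (by norm_num) (by norm_num)
      filter_upwards [hmem] with s hs
      filter_upwards [ae_restrict_mem measurableSet_Ioi] with x hx
      have hx0 : (0:ℝ) < x := hx
      have h0 : (0:ℝ) ≤ x ^ (s - 1) := Real.rpow_nonneg hx0.le _
      rw [Real.norm_eq_abs, abs_mul, abs_of_nonneg h0]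
      rcases le_total 1 x with hx1 | hx1
      · have h2 : x ^ (s - 1) ≤ x ^ ((2:ℝ) - 1) :=
          Real.rpow_le_rpow_of_exponent_le hx1 (by linarith [hs.2])
        have h3 := mul_le_mul_of_nonneg_right h2 (abs_nonneg (u x))
        have h4 : (0:ℝ) ≤ x ^ ((1/2:ℝ)-1) * |u x| :=
          mul_nonneg (Real.rpow_nonneg hx0.le _) (abs_nonneg _)
        exact le_trans h3 (le_add_of_nonneg_left h4)
      · have h2 : x ^ (s - 1) ≤ x ^ ((1/2:ℝ) - 1) :=
          Real.rpow_le_rpow_of_exponent_ge hx0 hx1 (by linarith [hs.1])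
        have h3 := mul_le_mul_of_nonneg_right h2 (abs_nonneg (u x))
        have h4 : (0:ℝ) ≤ x ^ ((2:ℝ)-1) * |u x| :=
          mul_nonneg (Real.rpow_nonneg hx0.le _) (abs_nonneg _)
        exact le_trans h3 (le_add_of_nonneg_right h4)
    · exact (hi (1/2) (by norm_num)).add (hi 2 (by norm_num))
    · filter_upwards [ae_restrict_mem measurableSet_Ioi] with x hx
      have hx0 : (0:ℝ) < x := hx
      have heq : (fun s : ℝ => x ^ (s - 1) * u x)
          = fun s => Real.exp (Real.log x * (s - 1)) * u x := by
        funext s; rw [Real.rpow_def_of_pos hx0]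
      rw [heq]
      exact ((Real.continuous_exp.comp (continuous_const.mul
        (continuous_id.sub continuous_const))).mul continuous_const).continuousAt
  have h1 : Tendsto M (nhdsWithin 1 (Set.Ioi 1)) (nhds (M 1)) :=
    hMc.continuousWithinAt.tendsto
  have h2 : Tendsto M (nhdsWithin 1 (Set.Ioi 1)) (nhds (g 1)) := by
    refine Tendsto.congr' ?_ (hg.continuousWithinAt.tendsto)
    filter_upwards [self_mem_nhdsWithin] with s hs
    exact (h s hs).symm
  exact tendsto_nhds_unique h1 h2

lemma gammaAt (x : ℝ) (hx : 0 < x) : ContinuousAt Real.Gamma x := by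
  refine (Real.differentiableAt_Gamma (fun m => ?_)).continuousAt
  have : (0:ℝ) ≤ m := Nat.cast_nonneg m
  intro h; rw [h] at hx; linarith

lemma poch_pos {x : ℝ} (hx : 0 < x) (k : ℕ) : 0 < (ascPochhammer ℝ k).eval x := by
  have h := gamma_poch hx k
  have h1 : 0 < Real.Gamma (x + k) := Real.Gamma_pos_of_pos (by positivity)
  have h2 : 0 < Real.Gamma x := Real.Gamma_pos_of_pos hx
  nlinarith

-- core fraction identity for the w-weights

lemma mydiv_helper (PA GA PB GB : ℝ) (hPB : PB ≠ 0) (hGB : GB ≠ 0) :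
    (PA * GA) / GB = GA / (PB * GB) * (PA * PB) := by
  field_simp

lemma frac_w {p q : ℕ} (a : Fin p → ℝ) (b : Fin q → ℝ)
    (ha : ∀ i, -1 < a i) (hb : ∀ i, -1 < b i)
    (n : Fin q → ℕ) (j : Fin q) (k : ℕ)
    (hk : ∀ l, k + (if l = j then 1 else 0) ≤ n l) {s : ℝ} (hs : 1 ≤ s) :
    (∏ i, Real.Gamma (s + k + a i)) /
        (∏ l, Real.Gamma (s + k + b l + if l = j then 1 else 0))
      = (∏ i, Real.Gamma (s + a i)) / (∏ l, Real.Gamma (s + b l + n l)) *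
        ((∏ i, (ascPochhammer ℝ k).eval (s + a i)) *
          ∏ l, (ascPochhammer ℝ (n l - (k + if l = j then 1 else 0))).eval
            (s + (b l + ((k + if l = j then 1 else 0 : ℕ) : ℝ)))) := by
  have hsa : ∀ i, 0 < s + a i := fun i => by have := ha i; linarith
  have hsb : ∀ l, 0 < s + (b l + ((k + if l = j then 1 else 0 : ℕ) : ℝ)) := fun l => by
    have := hb l
    have : (0:ℝ) ≤ ((k + if l = j then 1 else 0 : ℕ) : ℝ) := Nat.cast_nonneg _
    have := hb l
    linarith
  -- numerator
  have h1 : ∀ i, Real.Gamma (s + k + a i)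
      = (ascPochhammer ℝ k).eval (s + a i) * Real.Gamma (s + a i) := by
    intro i
    have := gamma_poch (hsa i) k
    rw [show s + (k:ℝ) + a i = s + a i + k by ring, this]
  -- denominator of G
  have h2 : ∀ l, Real.Gamma (s + b l + n l)
      = (ascPochhammer ℝ (n l - (k + if l = j then 1 else 0))).eval
          (s + (b l + ((k + if l = j then 1 else 0 : ℕ) : ℝ)))
        * Real.Gamma (s + (b l + ((k + if l = j then 1 else 0 : ℕ) : ℝ))) := by
    intro l
    have h := gamma_poch (hsb l) (n l - (k + if l = j then 1 else 0))
    have harg : s + (b l + ((k + if l = j then 1 else 0 : ℕ) : ℝ))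
        + ((n l - (k + if l = j then 1 else 0) : ℕ) : ℝ) = s + b l + n l := by
      have := hk l
      push_cast [Nat.cast_sub (hk l)]
      ring
    rw [← harg, h]
  -- denominator of LHS matches Γ(s + (b l + k + δ))
  have h3 : ∀ l, Real.Gamma (s + k + b l + if l = j then 1 else 0)
      = Real.Gamma (s + (b l + ((k + if l = j then 1 else 0 : ℕ) : ℝ))) := by
    intro l
    congr 1
    push_cast
    by_cases h : l = j <;> simp [h] <;> ring
  rw [prod_congr rfl (fun i _ => h1 i), prod_congr rfl (fun l _ => h3 l),
    prod_congr rfl (fun l _ => h2 l), prod_mul_distrib, prod_mul_distrib]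
  have hGa : ∀ i, Real.Gamma (s + a i) ≠ 0 :=
    fun i => ne_of_gt (Real.Gamma_pos_of_pos (hsa i))
  have hGb : ∀ l, Real.Gamma (s + (b l + ((k + if l = j then 1 else 0 : ℕ) : ℝ))) ≠ 0 :=
    fun l => ne_of_gt (Real.Gamma_pos_of_pos (hsb l))
  have hpb : ∀ l, (ascPochhammer ℝ (n l - (k + if l = j then 1 else 0))).eval
      (s + (b l + ((k + if l = j then 1 else 0 : ℕ) : ℝ))) ≠ 0 :=
    fun l => ne_of_gt (poch_pos (hsb l) _)
  have hPB : (∏ l, (ascPochhammer ℝ (n l - (k + if l = j then 1 else 0))).eval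
      (s + (b l + ((k + if l = j then 1 else 0 : ℕ) : ℝ)))) ≠ 0 :=
    prod_ne_zero_iff.2 (fun l _ => hpb l)
  have hGB : (∏ l, Real.Gamma (s + (b l + ((k + if l = j then 1 else 0 : ℕ) : ℝ)))) ≠ 0 :=
    prod_ne_zero_iff.2 (fun l _ => hGb l)
  exact mydiv_helper _ _ _ _ hPB hGB

lemma mydiv_helper2 (PA GA PB GB T : ℝ) (hPB : PB ≠ 0) (hGB : GB ≠ 0) :
    (PA * GA) / GB * T = GA / (PB * GB) * (PA * PB * T) := by
  field_simp

lemma frac_v {p q : ℕ} (a : Fin p → ℝ) (b : Fin q → ℝ)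
    (ha : ∀ i, -1 < a i) (hb : ∀ i, -1 < b i)
    (n : Fin q → ℕ) (k : ℕ) (hk : ∀ l, k ≤ n l) {s : ℝ} (hs : 1 ≤ s) (e : ℕ) :
    (∏ i, Real.Gamma (s + k + a i)) / (∏ l, Real.Gamma (s + k + b l)) * (s + k - 1) ^ e
      = (∏ i, Real.Gamma (s + a i)) / (∏ l, Real.Gamma (s + b l + n l)) *
        ((∏ i, (ascPochhammer ℝ k).eval (s + a i)) *
          (∏ l, (ascPochhammer ℝ (n l - k)).eval (s + (b l + (k:ℝ)))) *
            (s + ((k:ℝ) - 1)) ^ e) := by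
  have hsa : ∀ i, 0 < s + a i := fun i => by have := ha i; linarith
  have hsb : ∀ l, 0 < s + (b l + (k:ℝ)) := fun l => by
    have h1 := hb l
    have h2 : (0:ℝ) ≤ (k:ℝ) := Nat.cast_nonneg _
    linarith
  have h1 : ∀ i, Real.Gamma (s + k + a i)
      = (ascPochhammer ℝ k).eval (s + a i) * Real.Gamma (s + a i) := by
    intro i
    have := gamma_poch (hsa i) k
    rw [show s + (k:ℝ) + a i = s + a i + k by ring, this]
  have h2 : ∀ l, Real.Gamma (s + b l + n l)
      = (ascPochhammer ℝ (n l - k)).eval (s + (b l + (k:ℝ)))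
        * Real.Gamma (s + (b l + (k:ℝ))) := by
    intro l
    have h := gamma_poch (hsb l) (n l - k)
    have harg : s + (b l + (k:ℝ)) + ((n l - k : ℕ) : ℝ) = s + b l + n l := by
      push_cast [Nat.cast_sub (hk l)]
      ring
    rw [← harg, h]
  have h3 : ∀ l, Real.Gamma (s + k + b l) = Real.Gamma (s + (b l + (k:ℝ))) := by
    intro l; congr 1; ring
  rw [prod_congr rfl (fun i _ => h1 i), prod_congr rfl (fun l _ => h3 l),
    prod_congr rfl (fun l _ => h2 l), prod_mul_distrib, prod_mul_distrib,
    show s + ((k:ℝ) - 1) = s + k - 1 by ring]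
  have hGB : (∏ l, Real.Gamma (s + (b l + (k:ℝ)))) ≠ 0 :=
    prod_ne_zero_iff.2 (fun l _ => ne_of_gt (Real.Gamma_pos_of_pos (hsb l)))
  have hPB : (∏ l, (ascPochhammer ℝ (n l - k)).eval (s + (b l + (k:ℝ)))) ≠ 0 :=
    prod_ne_zero_iff.2 (fun l _ => ne_of_gt (poch_pos (hsb l) _))
  exact mydiv_helper2 _ _ _ _ _ hPB hGB

lemma poch_eval_Icc (d : ℕ) (s : ℝ) :
    (ascPochhammer ℝ d).eval (1 - s) = ∏ t ∈ Finset.Icc 1 d, ((t:ℝ) - s) := by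
  rw [poch_eval_prod]
  rw [show Finset.Icc 1 d = Finset.Ico 1 (d+1) by rw [Finset.Ico_add_one_right_eq_Icc]]
  rw [Finset.prod_Ico_eq_prod_range]
  refine Finset.prod_congr rfl (fun i _ => ?_)
  push_cast
  ring

lemma poly_factor (P : Polynomial ℝ) (d : ℕ) (hdeg : P.natDegree ≤ d)
    (hroots : ∀ t : ℕ, 1 ≤ t → t ≤ d → P.eval (t:ℝ) = 0) :
    ∃ c : ℝ, ∀ s : ℝ, P.eval s = c * ∏ t ∈ Finset.Icc 1 d, ((t:ℝ) - s) := by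
  rcases Nat.eq_zero_or_pos d with rfl | hd
  · refine ⟨P.coeff 0, fun s => ?_⟩
    rw [Polynomial.eq_C_of_natDegree_le_zero hdeg]
    simp
  · set Q : Polynomial ℝ := ∏ t ∈ Finset.Icc 1 d, (X - C (t:ℝ)) with hQ
    have hQm : Q.Monic := monic_prod_of_monic _ _ (fun t _ => monic_X_sub_C _)
    have hQdeg : Q.natDegree = d := by
      rw [hQ, natDegree_prod _ _ (fun t _ => X_sub_C_ne_zero _)]
      simp only [natDegree_X_sub_C, Finset.sum_const, smul_eq_mul, mul_one, Nat.card_Icc,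
        Nat.add_sub_cancel]
    set c := P.coeff d with hc
    set R := P - C c * Q with hR
    have hRdeg : R.natDegree ≤ d := by
      refine le_trans (natDegree_sub_le _ _) (max_le hdeg ?_)
      refine le_trans (natDegree_mul_le) ?_
      simp [hQdeg]
    have hRcoeff : R.coeff d = 0 := by
      have : Q.coeff d = 1 := by
        have := hQm.leadingCoeff
        rwa [leadingCoeff, hQdeg] at this
      simp [hR, this, hc]
    have hR0 : R = 0 := by
      rcases eq_or_ne R 0 with h | h
      · exact h
      have hlt : R.natDegree < d := by
        rcases lt_or_eq_of_le hRdeg with h2 | h2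
        · exact h2
        · exfalso
          have := Polynomial.leadingCoeff_ne_zero.2 h
          rw [leadingCoeff, h2] at this
          exact this hRcoeff
      refine eq_zero_of_natDegree_lt_card_of_eval_eq_zero' R
        ((Finset.Icc 1 d).image (Nat.cast : ℕ → ℝ)) ?_ ?_
      · intro x hx
        obtain ⟨t, ht, rfl⟩ := Finset.mem_image.1 hx
        have h1 := Finset.mem_Icc.1 ht
        have hP := hroots t h1.1 h1.2
        have hQt : Q.eval (t:ℝ) = 0 := by
          rw [hQ, eval_prod]
          exact Finset.prod_eq_zero ht (by simp)
        simp [hR, hP, hQt]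
      · rwa [Finset.card_image_of_injective _ Nat.cast_injective, Nat.card_Icc,
          Nat.add_sub_cancel]
    have hPQ : P = C c * Q := by
      have h := sub_eq_zero.1 (hR ▸ hR0)
      exact h
    refine ⟨c * (-1)^d, fun s => ?_⟩
    rw [hPQ]
    have : Q.eval s = ∏ t ∈ Finset.Icc 1 d, (s - (t:ℝ)) := by
      rw [hQ, eval_prod]; simp
    have hswap : ∏ t ∈ Finset.Icc 1 d, ((t:ℝ) - s)
        = (-1:ℝ)^d * ∏ t ∈ Finset.Icc 1 d, (s - (t:ℝ)) := by
      rw [Finset.prod_congr rfl (show ∀ t ∈ Finset.Icc 1 d, ((t:ℝ) - s) = (-1) * (s - t)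
        from fun t _ => by ring), Finset.prod_mul_distrib, Finset.prod_const, Nat.card_Icc,
        Nat.add_sub_cancel]
    have h1 : ((-1:ℝ))^d * (-1)^d = 1 := by
      rw [← pow_add, ← two_mul, pow_mul]
      norm_num
    rw [eval_mul, eval_C, this, hswap]
    rw [show c * (-1:ℝ)^d * ((-1:ℝ)^d * ∏ t ∈ Finset.Icc 1 d, (s - (t:ℝ)))
        = ((-1:ℝ)^d * (-1:ℝ)^d) * (c * ∏ t ∈ Finset.Icc 1 d, (s - (t:ℝ))) from by ring, h1,
      one_mul]

lemma gammaAt' (c x : ℝ) (h : 0 < x + c) : ContinuousAt (fun s : ℝ => Real.Gamma (s + c)) x := by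
  have h1 : ContinuousAt Real.Gamma (x + c) := gammaAt _ h
  have h2 : ContinuousAt (fun s : ℝ => s + c) x := continuousAt_id.add continuousAt_const
  have h3 : ContinuousAt (Real.Gamma ∘ fun s : ℝ => s + c) x := ContinuousAt.comp (g := Real.Gamma) (f := fun s : ℝ => s + c) h1 h2
  exact h3

lemma gammaAt'' (c d x : ℝ) (h : 0 < x + c + d) :
    ContinuousAt (fun s : ℝ => Real.Gamma (s + c + d)) x := by
  have h1 : ContinuousAt Real.Gamma (x + c + d) := gammaAt _ h
  have h2 : ContinuousAt (fun s : ℝ => s + c + d) x :=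
    (continuousAt_id.add continuousAt_const).add continuousAt_const
  have h3 : ContinuousAt (Real.Gamma ∘ fun s : ℝ => s + c + d) x := ContinuousAt.comp (g := Real.Gamma) (f := fun s : ℝ => s + c + d) h1 h2
  exact h3

lemma int_poly' (u : ℝ → ℝ) (hc : ContinuousOn u (Set.Ioi 0))
    (hi : ∀ σ : ℝ, 0 < σ → IntegrableOn (fun x : ℝ => x ^ (σ - 1) * |u x|) (Set.Ioi 0))
    (Q : Polynomial ℝ) {s : ℝ} (hs : 0 < s) :
    IntegrableOn (fun x : ℝ => Q.eval x * u x * x ^ (s - 1)) (Set.Ioi 0) :=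
  int_poly u hc hi Q (Q.natDegree + 1)
    (lt_of_le_of_lt degree_le_natDegree (by exact_mod_cast Nat.lt_succ_self _)) hs
/-- In the Laguerre-like setting, the Mellin transform of a type I function
(a polynomial combination of the weights satisfying the type I orthogonality conditions)
equals `c · Γ(s+a)/Γ(s+b+n) · (1-s)_{N-1}` for some constant `c`, where `N = |n| + |m|`. -/
theorem stmt_10
    (p q : ℕ) (hpq : q < p)
    (a : Fin p → ℝ) (b : Fin q → ℝ)
    (ha : ∀ i, -1 < a i) (hb : ∀ i, -1 < b i)
    (hab : ∀ j : Fin q, a (Fin.castLE hpq.le j) < b j)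
    (w : Fin q → ℝ → ℝ) (v : Fin (p - q) → ℝ → ℝ)
    (hw_cont : ∀ j, ContinuousOn (w j) (Set.Ioi 0))
    (hv_cont : ∀ i, ContinuousOn (v i) (Set.Ioi 0))
    (hw_int : ∀ j, ∀ σ : ℝ, 0 < σ →
      IntegrableOn (fun x : ℝ => x ^ (σ - 1) * |w j x|) (Set.Ioi 0))
    (hv_int : ∀ i, ∀ σ : ℝ, 0 < σ →
      IntegrableOn (fun x : ℝ => x ^ (σ - 1) * |v i x|) (Set.Ioi 0))
    (hw_mellin : ∀ j, ∀ s : ℝ, 1 < s →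
      ∫ x in Set.Ioi (0:ℝ), x ^ (s - 1) * w j x
        = (∏ i, Real.Gamma (s + a i)) /
          (∏ i, Real.Gamma (s + b i + if i = j then 1 else 0)))
    (hv_mellin : ∀ i, ∀ s : ℝ, 1 < s →
      ∫ x in Set.Ioi (0:ℝ), x ^ (s - 1) * v i x
        = (∏ i', Real.Gamma (s + a i')) / (∏ i', Real.Gamma (s + b i')) *
            (s - 1) ^ (i : ℕ))
    (n : Fin q → ℕ) (m : Fin (p - q) → ℕ)
    (hnd1 : ∀ i j, |(n i : ℤ) - (n j : ℤ)| ≤ 1)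
    (hnd2 : ∀ i j, |(m i : ℤ) - (m j : ℤ)| ≤ 1)
    (hnd3 : ∀ i j, |(n i : ℤ) - (m j : ℤ)| ≤ 1)
    (hmstep : ∀ i j : Fin (p - q), i ≤ j → m j ≤ m i ∧ m i ≤ m j + 1)
    (N : ℕ) (hN : N = ∑ j, n j + ∑ j, m j)
    (A : Fin q → Polynomial ℝ) (B : Fin (p - q) → Polynomial ℝ)
    (hA : ∀ j, (A j).degree < (n j : WithBot ℕ))
    (hB : ∀ j, (B j).degree < (m j : WithBot ℕ))
    (horth : ∀ k : ℕ, k + 2 ≤ N →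
      ∫ x in Set.Ioi (0:ℝ),
        (∑ j, (A j).eval x * w j x + ∑ j, (B j).eval x * v j x) * x ^ (k : ℕ) = 0) :
    ∃ c : ℝ, ∀ s : ℝ, 1 < s →
      ∫ x in Set.Ioi (0:ℝ),
          (∑ j, (A j).eval x * w j x + ∑ j, (B j).eval x * v j x) * x ^ (s - 1)
        = c * ((∏ i, Real.Gamma (s + a i)) / (∏ i, Real.Gamma (s + b i + n i))) *
            (ascPochhammer ℝ (N - 1)).eval (1 - s) := by
  classical
  -- extended Mellin transforms (valid for s ≥ 1 by continuity)
  have hw1 : ∀ (j : Fin q) (s : ℝ), 1 ≤ s →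
      ∫ x in Set.Ioi (0:ℝ), x ^ (s - 1) * w j x
        = (∏ i, Real.Gamma (s + a i)) /
          (∏ i, Real.Gamma (s + b i + if i = j then 1 else 0)) := by
    intro j s hs
    rcases eq_or_lt_of_le hs with rfl | h
    · refine mellin_at_one (w j) (hw_cont j) (hw_int j) _ ?_ (hw_mellin j)
      refine ContinuousAt.div ?_ ?_ ?_
      · exact tendsto_finset_prod _ (fun i _ =>
          gammaAt' (a i) 1 (by have := ha i; linarith))
      · exact tendsto_finset_prod _ (fun i _ =>
          gammaAt'' (b i) (if i = j then 1 else 0) 1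
            (by have h1 := hb i
                have h2 : (0:ℝ) ≤ (if i = j then (1:ℝ) else 0) := by split <;> norm_num
                linarith))
      · refine ne_of_gt (prod_pos (fun i _ => Real.Gamma_pos_of_pos ?_))
        have h1 := hb i
        have h2 : (0:ℝ) ≤ (if i = j then (1:ℝ) else 0) := by split <;> norm_num
        linarith
    · exact hw_mellin j s h
  have hv1 : ∀ (i : Fin (p - q)) (s : ℝ), 1 ≤ s →
      ∫ x in Set.Ioi (0:ℝ), x ^ (s - 1) * v i x
        = (∏ i', Real.Gamma (s + a i')) / (∏ i', Real.Gamma (s + b i')) *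
            (s - 1) ^ (i : ℕ) := by
    intro i s hs
    rcases eq_or_lt_of_le hs with rfl | h
    · refine mellin_at_one (v i) (hv_cont i) (hv_int i) _ ?_ (hv_mellin i)
      refine ContinuousAt.mul (ContinuousAt.div ?_ ?_ ?_) ?_
      · exact tendsto_finset_prod _ (fun i' _ =>
          gammaAt' (a i') 1 (by have := ha i'; linarith))
      · exact tendsto_finset_prod _ (fun i' _ =>
          gammaAt' (b i') 1 (by have := hb i'; linarith))
      · refine ne_of_gt (prod_pos (fun i' _ => Real.Gamma_pos_of_pos ?_))
        have := hb i'; linarith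
      · exact ContinuousAt.pow (continuousAt_id.sub continuousAt_const) _
    · exact hv_mellin i s h
  -- splitting the Mellin transform of F into pieces
  have hsplit : ∀ s : ℝ, 1 ≤ s →
      ∫ x in Set.Ioi (0:ℝ),
          (∑ j, (A j).eval x * w j x + ∑ j, (B j).eval x * v j x) * x ^ (s - 1)
        = (∑ j, ∫ x in Set.Ioi (0:ℝ), (A j).eval x * w j x * x ^ (s - 1))
          + ∑ j, ∫ x in Set.Ioi (0:ℝ), (B j).eval x * v j x * x ^ (s - 1) := by
    intro s hs
    have hs0 : (0:ℝ) < s := lt_of_lt_of_le one_pos hs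
    have hIA : ∀ j : Fin q, IntegrableOn
        (fun x : ℝ => (A j).eval x * w j x * x ^ (s - 1)) (Set.Ioi 0) :=
      fun j => int_poly' (w j) (hw_cont j) (hw_int j) (A j) hs0
    have hIB : ∀ j : Fin (p - q), IntegrableOn
        (fun x : ℝ => (B j).eval x * v j x * x ^ (s - 1)) (Set.Ioi 0) :=
      fun j => int_poly' (v j) (hv_cont j) (hv_int j) (B j) hs0
    have hfun : (fun x : ℝ =>
        (∑ j, (A j).eval x * w j x + ∑ j, (B j).eval x * v j x) * x ^ (s - 1))
        = fun x : ℝ => (∑ j, (A j).eval x * w j x * x ^ (s - 1))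
          + ∑ j, (B j).eval x * v j x * x ^ (s - 1) := by
      funext x
      rw [add_mul, Finset.sum_mul, Finset.sum_mul]
    rw [hfun, integral_add (integrable_finset_sum _ (fun j _ => hIA j))
        (integrable_finset_sum _ (fun j _ => hIB j)),
      integral_finset_sum _ (fun j _ => hIA j), integral_finset_sum _ (fun j _ => hIB j)]
  -- Mellin transform of each piece as a finite sum of Gamma ratios
  have hws : ∀ (j : Fin q) (s : ℝ), 1 ≤ s →
      ∫ x in Set.Ioi (0:ℝ), (A j).eval x * w j x * x ^ (s - 1)
        = ∑ k ∈ range (n j), (A j).coeff k *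
            ((∏ i, Real.Gamma (s + k + a i)) /
              (∏ i, Real.Gamma (s + k + b i + if i = j then 1 else 0))) :=
    fun j s hs => mellin_poly (w j) (hw_cont j) (hw_int j) _ (hw1 j) (A j) (n j) (hA j) hs
  have hvs : ∀ (j : Fin (p - q)) (s : ℝ), 1 ≤ s →
      ∫ x in Set.Ioi (0:ℝ), (B j).eval x * v j x * x ^ (s - 1)
        = ∑ k ∈ range (m j), (B j).coeff k *
            ((∏ i', Real.Gamma (s + k + a i')) / (∏ i', Real.Gamma (s + k + b i')) *
              (s + k - 1) ^ (j : ℕ)) :=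
    fun j s hs => mellin_poly (v j) (hv_cont j) (hv_int j) _ (hv1 j) (B j) (m j) (hB j) hs
  -- index bounds from near-diagonality
  have hkn : ∀ (j : Fin q) (k : ℕ), k < n j →
      ∀ l, k + (if l = j then 1 else 0) ≤ n l := by
    intro j k hk l
    have h := hnd1 l j
    rw [abs_le] at h
    by_cases hlj : l = j <;> simp [hlj] <;> omega
  have hkm : ∀ (j : Fin (p - q)) (k : ℕ), k < m j → ∀ l : Fin q, k ≤ n l := by
    intro j k hk l
    have h := hnd3 l j
    rw [abs_le] at h
    omega
  -- the polynomial P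
  set PW : Fin q → ℕ → Polynomial ℝ := fun j k =>
    (∏ i, pochC (a i) k) *
      ∏ l, pochC (b l + ((k + if l = j then 1 else 0 : ℕ) : ℝ))
        (n l - (k + if l = j then 1 else 0)) with hPW
  set PV : Fin (p - q) → ℕ → Polynomial ℝ := fun j k =>
    (∏ i, pochC (a i) k) * (∏ l, pochC (b l + (k : ℝ)) (n l - k)) *
      (Polynomial.X + Polynomial.C ((k:ℝ) - 1)) ^ (j : ℕ) with hPV
  set P : Polynomial ℝ :=
    (∑ j, ∑ k ∈ range (n j), Polynomial.C ((A j).coeff k) * PW j k)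
      + ∑ j, ∑ k ∈ range (m j), Polynomial.C ((B j).coeff k) * PV j k with hP
  -- evaluation identities
  have hPWeval : ∀ (j : Fin q) (k : ℕ), k < n j → ∀ s : ℝ, 1 ≤ s →
      (∏ i, Real.Gamma (s + k + a i)) /
          (∏ i, Real.Gamma (s + k + b i + if i = j then 1 else 0))
        = ((∏ i, Real.Gamma (s + a i)) / (∏ i, Real.Gamma (s + b i + n i)))
            * (PW j k).eval s := by
    intro j k hk s hs
    rw [frac_w a b ha hb n j k (hkn j k hk) hs]
    rw [hPW]
    simp only [eval_mul, eval_prod, pochC_eval]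
  have hPVeval : ∀ (j : Fin (p - q)) (k : ℕ), k < m j → ∀ s : ℝ, 1 ≤ s →
      (∏ i', Real.Gamma (s + k + a i')) / (∏ i', Real.Gamma (s + k + b i')) *
          (s + k - 1) ^ (j : ℕ)
        = ((∏ i, Real.Gamma (s + a i)) / (∏ i, Real.Gamma (s + b i + n i)))
            * (PV j k).eval s := by
    intro j k hk s hs
    rw [frac_v a b ha hb n k (hkm j k hk) hs (j : ℕ)]
    rw [hPV]
    simp only [eval_mul, eval_prod, pochC_eval, eval_pow, eval_add, eval_X, eval_C]
  -- main identity
  have hmain : ∀ s : ℝ, 1 ≤ s →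
      ∫ x in Set.Ioi (0:ℝ),
          (∑ j, (A j).eval x * w j x + ∑ j, (B j).eval x * v j x) * x ^ (s - 1)
        = ((∏ i, Real.Gamma (s + a i)) / (∏ i, Real.Gamma (s + b i + n i)))
            * P.eval s := by
    intro s hs
    rw [hsplit s hs, sum_congr rfl (fun j _ => hws j s hs),
      sum_congr rfl (fun j _ => hvs j s hs), hP, eval_add, mul_add]
    congr 1
    · rw [eval_finset_sum, Finset.mul_sum]
      refine sum_congr rfl (fun j _ => ?_)
      rw [eval_finset_sum, Finset.mul_sum]
      refine sum_congr rfl (fun k hk => ?_)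
      rw [eval_mul, eval_C, hPWeval j k (mem_range.1 hk) s hs]
      ring
    · rw [eval_finset_sum, Finset.mul_sum]
      refine sum_congr rfl (fun j _ => ?_)
      rw [eval_finset_sum, Finset.mul_sum]
      refine sum_congr rfl (fun k hk => ?_)
      rw [eval_mul, eval_C, hPVeval j k (mem_range.1 hk) s hs]
      ring
  -- degree bounds
  have hdegW : ∀ (j : Fin q) (k : ℕ), k < n j →
      (Polynomial.C ((A j).coeff k) * PW j k).natDegree ≤ N - 1 := by
    intro j k hk
    have hd1 : (PW j k).natDegree ≤
        p * k + ∑ l, (n l - (k + if l = j then 1 else 0)) := by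
      simp only [hPW]
      refine le_trans natDegree_mul_le (add_le_add ?_ ?_)
      · refine le_trans (natDegree_prod_le _ _) ?_
        refine le_trans (Finset.sum_le_sum (fun i _ => pochC_natDegree_le (a i) k)) ?_
        exact le_of_eq (by simp [Finset.sum_const, card_univ, mul_comm])
      · refine le_trans (natDegree_prod_le _ _) ?_
        exact Finset.sum_le_sum (fun l _ => pochC_natDegree_le _ _)
    have hd2 : (Polynomial.C ((A j).coeff k) * PW j k).natDegree ≤
        p * k + ∑ l, (n l - (k + if l = j then 1 else 0)) := by
      refine le_trans natDegree_mul_le ?_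
      simpa [natDegree_C] using hd1
    have e2 : (∑ l, (n l - (k + if l = j then 1 else 0)))
        + (∑ l : Fin q, (k + if l = j then 1 else 0)) = ∑ l, n l := by
      rw [← Finset.sum_add_distrib]
      exact sum_congr rfl (fun l _ => Nat.sub_add_cancel (hkn j k hk l))
    have e3 : ∑ l : Fin q, (k + if l = j then 1 else 0) = q * k + 1 := by
      rw [Finset.sum_add_distrib, Finset.sum_const, card_univ, Fintype.card_fin, smul_eq_mul]
      simp [Finset.sum_ite_eq']
    have e5 : (p - q) * k ≤ ∑ j', m j' := by
      have h1 : ∀ i' ∈ (univ : Finset (Fin (p - q))), k ≤ m i' := fun i' _ => by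
        have h2 := hnd3 j i'
        rw [abs_le] at h2
        omega
      have h2 := Finset.card_nsmul_le_sum univ m k h1
      simpa [card_univ, Fintype.card_fin, mul_comm] using h2
    have e6 : p * k = (p - q) * k + q * k := by
      rw [← add_mul]
      congr 1
      omega
    omega
  have hdegV : ∀ (j : Fin (p - q)) (k : ℕ), k < m j →
      (Polynomial.C ((B j).coeff k) * PV j k).natDegree ≤ N - 1 := by
    intro j k hk
    have hd1 : (PV j k).natDegree ≤ (p * k + ∑ l, (n l - k)) + (j : ℕ) := by
      simp only [hPV]
      refine le_trans natDegree_mul_le (add_le_add ?_ ?_)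
      · refine le_trans natDegree_mul_le (add_le_add ?_ ?_)
        · refine le_trans (natDegree_prod_le _ _) ?_
          refine le_trans (Finset.sum_le_sum (fun i _ => pochC_natDegree_le (a i) k)) ?_
          exact le_of_eq (by simp [Finset.sum_const, card_univ, mul_comm])
        · refine le_trans (natDegree_prod_le _ _) ?_
          exact Finset.sum_le_sum (fun l _ => pochC_natDegree_le _ _)
      · exact le_of_eq (by rw [natDegree_pow, natDegree_X_add_C, mul_one])
    have hd2 : (Polynomial.C ((B j).coeff k) * PV j k).natDegree ≤
        (p * k + ∑ l, (n l - k)) + (j : ℕ) := by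
      refine le_trans natDegree_mul_le ?_
      simpa [natDegree_C] using hd1
    have e2 : (∑ l, (n l - k)) + (∑ _l : Fin q, k) = ∑ l, n l := by
      rw [← Finset.sum_add_distrib]
      exact sum_congr rfl (fun l _ => Nat.sub_add_cancel (hkm j k hk l))
    have e3 : ∑ _l : Fin q, k = q * k := by
      simp [Finset.sum_const, card_univ, mul_comm]
    have e5 : (p - q) * (m j - 1) + ((j : ℕ) + 1) ≤ ∑ i, m i := by
      have hle : ∀ i ∈ (univ : Finset (Fin (p - q))),
          (if i ≤ j then m j else m j - 1) ≤ m i := by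
        intro i _
        by_cases h : i ≤ j
        · simpa [h] using (hmstep i j h).1
        · have hji : j ≤ i := le_of_not_ge h
          have h2 := (hmstep j i hji).2
          simp only [h, if_false]
          omega
      have h1 := Finset.sum_le_sum hle
      have h2 : ∑ i : Fin (p - q), (if i ≤ j then m j else m j - 1)
          = (p - q) * (m j - 1) + ∑ i : Fin (p - q), (if i ≤ j then 1 else 0) := by
        rw [Finset.sum_congr rfl (show ∀ i ∈ (univ : Finset (Fin (p - q))),
            (if i ≤ j then m j else m j - 1) = (m j - 1) + (if i ≤ j then 1 else 0)
          from fun i _ => by split <;> omega), Finset.sum_add_distrib, Finset.sum_const,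
          card_univ, Fintype.card_fin, smul_eq_mul]
      have h3 : ∑ i : Fin (p - q), (if i ≤ j then 1 else 0) = (j : ℕ) + 1 := by
        have hfil : (univ.filter (fun i : Fin (p - q) => i ≤ j)) = Finset.Iic j := by
          ext i
          simp
        rw [← Finset.sum_filter, hfil, Finset.sum_const, smul_eq_mul, mul_one, Fin.card_Iic]
      omega
    have e7 : (p - q) * k ≤ (p - q) * (m j - 1) := Nat.mul_le_mul_left _ (by omega)
    have e6 : p * k = (p - q) * k + q * k := by
      rw [← add_mul]
      congr 1
      omega
    omega
  have hPdeg : P.natDegree ≤ N - 1 := by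
    rw [hP]
    refine le_trans (natDegree_add_le _ _) (max_le ?_ ?_)
    · exact natDegree_sum_le_of_forall_le _ _ (fun j _ =>
        natDegree_sum_le_of_forall_le _ _ (fun k hk => hdegW j k (mem_range.1 hk)))
    · exact natDegree_sum_le_of_forall_le _ _ (fun j _ =>
        natDegree_sum_le_of_forall_le _ _ (fun k hk => hdegV j k (mem_range.1 hk)))
  have hGpos : ∀ s : ℝ, 1 ≤ s →
      0 < (∏ i, Real.Gamma (s + a i)) / (∏ i, Real.Gamma (s + b i + n i)) := by
    intro s hs
    refine div_pos (prod_pos fun i _ => Real.Gamma_pos_of_pos (by have := ha i; linarith))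
      (prod_pos fun i _ => Real.Gamma_pos_of_pos ?_)
    have h1 := hb i
    have h2 : (0:ℝ) ≤ ((n i : ℕ) : ℝ) := Nat.cast_nonneg _
    linarith
  have hroots : ∀ t : ℕ, 1 ≤ t → t ≤ N - 1 → P.eval (t:ℝ) = 0 := by
    intro t h1 h2
    have hts : (1:ℝ) ≤ (t:ℕ) := by exact_mod_cast h1
    have hm := hmain (t:ℝ) hts
    have hIeq : ∫ x in Set.Ioi (0:ℝ),
        (∑ j, (A j).eval x * w j x + ∑ j, (B j).eval x * v j x) * x ^ ((t:ℝ) - 1)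
        = ∫ x in Set.Ioi (0:ℝ),
        (∑ j, (A j).eval x * w j x + ∑ j, (B j).eval x * v j x) * x ^ ((t - 1 : ℕ)) := by
      refine setIntegral_congr_fun measurableSet_Ioi (fun x hx => ?_)
      have hcast : ((t - 1 : ℕ) : ℝ) = (t:ℝ) - 1 := by
        push_cast [Nat.cast_sub h1]
        ring
      rw [← hcast, Real.rpow_natCast]
    have h0 := horth (t - 1) (by omega)
    have hz : ((∏ i, Real.Gamma ((t:ℝ) + a i)) /
        (∏ i, Real.Gamma ((t:ℝ) + b i + n i))) * P.eval (t:ℝ) = 0 := by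
      rw [← hm, hIeq, h0]
    rcases mul_eq_zero.1 hz with h | h
    · exact absurd h (ne_of_gt (hGpos _ hts))
    · exact h
  obtain ⟨c0, hc0⟩ := poly_factor P (N - 1) hPdeg hroots
  refine ⟨c0, fun s hs => ?_⟩
  rw [hmain s hs.le, hc0 s, ← poch_eval_Icc]
  ring
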